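/- arXiv:1211.2671 — 2 statements merged into one kernel-verified Lean document; each statement's English description precedes it below -/
import Mathlib

section
/- Wielandt's inequality: if A and B are p×p real symmetric matrices, then for all j = 1,…,p and every k with 1 ≤ k ≤ j, λ_j(A+B) ≤ λ_{j-k+1}(A) + λ_k(B), where λ_i(M) denotes the i-th largest eigenvalue of M. -/
open Matrix

/-- `e` enumerates the eigenvalues of the real symmetric matrix `M` in decreasing order:
`e` is antitone and `M = U * diagonal e * Uᵀ` for some orthogonal `U`. -/
def IsDecrEigSeq {p : ℕ} (M : Matrix (Fin p) (Fin p) ℝ) (e : Fin p → ℝ) : Prop :=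
  Antitone e ∧ ∃ U : Matrix (Fin p) (Fin p) ℝ, Uᵀ * U = 1 ∧ M = U * Matrix.diagonal e * Uᵀ

lemma quad_eq' {p : ℕ} (U : Matrix (Fin p) (Fin p) ℝ) (e : Fin p → ℝ) (x : Fin p → ℝ) :
    x ⬝ᵥ ((U * Matrix.diagonal e * Uᵀ) *ᵥ x) = ∑ i, e i * ((Uᵀ *ᵥ x) i)^2 := by
  rw [← mulVec_mulVec, ← mulVec_mulVec, dotProduct_mulVec, ← mulVec_transpose]
  simp only [dotProduct, mulVec_diagonal, sq]
  exact Finset.sum_congr rfl fun i _ => by ring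

lemma norm_eq' {p : ℕ} (U : Matrix (Fin p) (Fin p) ℝ) (hU : Uᵀ * U = 1) (x : Fin p → ℝ) :
    ∑ i, ((Uᵀ *ᵥ x) i)^2 = x ⬝ᵥ x := by
  have h1 : U * Uᵀ = 1 := mul_eq_one_comm.mp hU
  have h : (Uᵀ *ᵥ x) ⬝ᵥ (Uᵀ *ᵥ x) = x ⬝ᵥ x := by
    rw [dotProduct_mulVec, ← mulVec_transpose, transpose_transpose, mulVec_mulVec, h1, one_mulVec]
  rw [← h]
  simp [dotProduct, sq]

lemma exists_ker' {p : ℕ} (W : Type) [AddCommGroup W] [Module ℝ W]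
    [FiniteDimensional ℝ W] (hm : Module.finrank ℝ W < p)
    (L : (Fin p → ℝ) →ₗ[ℝ] W) :
    ∃ x : Fin p → ℝ, x ≠ 0 ∧ L x = 0 := by
  have hni : ¬ Function.Injective L := fun h => by
    have := LinearMap.finrank_le_finrank_of_injective h
    simp [Module.finrank_pi] at this; omega
  rw [Function.not_injective_iff] at hni
  obtain ⟨a, b, hab, hne⟩ := hni
  exact ⟨a - b, sub_ne_zero_of_ne hne, by rw [map_sub, hab, sub_self]⟩

lemma sum_le' {p : ℕ} (e : Fin p → ℝ) (he : Antitone e) (y : Fin p → ℝ) (t : Fin p)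
    (hy : ∀ i : Fin p, (i : ℕ) < (t : ℕ) → y i = 0) :
    ∑ i, e i * y i ^ 2 ≤ e t * ∑ i, y i ^ 2 := by
  rw [Finset.mul_sum]
  refine Finset.sum_le_sum fun i _ => ?_
  by_cases h : (i : ℕ) < (t : ℕ)
  · simp [hy i h]
  · exact mul_le_mul_of_nonneg_right (he (by omega : t ≤ i)) (sq_nonneg _)

lemma sum_ge' {p : ℕ} (e : Fin p → ℝ) (he : Antitone e) (y : Fin p → ℝ) (t : Fin p)
    (hy : ∀ i : Fin p, (t : ℕ) < (i : ℕ) → y i = 0) :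
    e t * ∑ i, y i ^ 2 ≤ ∑ i, e i * y i ^ 2 := by
  rw [Finset.mul_sum]
  refine Finset.sum_le_sum fun i _ => ?_
  by_cases h : (t : ℕ) < (i : ℕ)
  · simp [hy i h]
  · exact mul_le_mul_of_nonneg_right (he (by omega : i ≤ t)) (sq_nonneg _)

/-- Wielandt's inequality (upper bound): for real symmetric `A, B`,
`λ_j(A+B) ≤ λ_{j-k+1}(A) + λ_k(B)` for all `1 ≤ k ≤ j ≤ p` (here `0`-indexed:
`λ_j(A+B) ≤ λ_{j-k}(A) + λ_k(B)` for `k ≤ j`). -/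
theorem wielandt_upper {p : ℕ} (A B : Matrix (Fin p) (Fin p) ℝ)
    (hA : A.IsSymm) (hB : B.IsSymm)
    (eA eB eAB : Fin p → ℝ)
    (hEA : IsDecrEigSeq A eA) (hEB : IsDecrEigSeq B eB) (hEAB : IsDecrEigSeq (A + B) eAB)
    (j k : Fin p) (hkj : (k : ℕ) ≤ (j : ℕ)) :
    eAB j ≤ eA ⟨(j : ℕ) - (k : ℕ), lt_of_le_of_lt (Nat.sub_le _ _) j.isLt⟩ + eB k := by
  obtain ⟨haA, UA, hUA, hdA⟩ := hEA
  obtain ⟨haB, UB, hUB, hdB⟩ := hEB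
  obtain ⟨haC, UC, hUC, hdC⟩ := hEAB
  have hjp : (j : ℕ) < p := j.isLt
  set m : ℕ := (j : ℕ) - (k : ℕ) with hm
  set r : ℕ := p - 1 - (j : ℕ) with hr
  -- build the constraint linear map
  let L1 : (Fin p → ℝ) →ₗ[ℝ] (Fin m → ℝ) :=
    LinearMap.pi fun i => (LinearMap.proj (⟨(i : ℕ), by omega⟩ : Fin p)).comp UAᵀ.mulVecLin
  let L2 : (Fin p → ℝ) →ₗ[ℝ] (Fin (k : ℕ) → ℝ) :=
    LinearMap.pi fun i => (LinearMap.proj (⟨(i : ℕ), by omega⟩ : Fin p)).comp UBᵀ.mulVecLin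
  let L3 : (Fin p → ℝ) →ₗ[ℝ] (Fin r → ℝ) :=
    LinearMap.pi fun i =>
      (LinearMap.proj (⟨(j : ℕ) + 1 + (i : ℕ), by omega⟩ : Fin p)).comp UCᵀ.mulVecLin
  obtain ⟨x, hx0, hLx⟩ := exists_ker' _ (by
      simp [Module.finrank_prod, Module.finrank_pi]
      omega) (L1.prod (L2.prod L3))
  have h1 : L1 x = 0 := congrArg Prod.fst hLx
  have h2 : L2 x = 0 := congrArg Prod.fst (congrArg Prod.snd hLx)
  have h3 : L3 x = 0 := congrArg Prod.snd (congrArg Prod.snd hLx)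
  have hyA : ∀ i : Fin p, (i : ℕ) < m → (UAᵀ *ᵥ x) i = 0 := by
    intro i hi
    have := congrFun h1 ⟨(i : ℕ), hi⟩
    rw [Matrix.mulVec_transpose]; simpa [L1, Matrix.mulVecLin] using this
  have hyB : ∀ i : Fin p, (i : ℕ) < (k : ℕ) → (UBᵀ *ᵥ x) i = 0 := by
    intro i hi
    have := congrFun h2 ⟨(i : ℕ), hi⟩
    rw [Matrix.mulVec_transpose]; simpa [L2, Matrix.mulVecLin] using this
  have hyC : ∀ i : Fin p, (j : ℕ) < (i : ℕ) → (UCᵀ *ᵥ x) i = 0 := by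
    intro i hi
    have hi2 : (i : ℕ) - (j : ℕ) - 1 < r := by omega
    have := congrFun h3 ⟨(i : ℕ) - (j : ℕ) - 1, hi2⟩
    simp only [L3, LinearMap.pi_apply, LinearMap.comp_apply, LinearMap.proj_apply,
      Matrix.mulVecLin_apply, Pi.zero_apply] at this
    have hieq : i = ⟨(j : ℕ) + 1 + ((i : ℕ) - (j : ℕ) - 1), by omega⟩ := Fin.ext (by dsimp only; omega)
    exact (congrArg (fun t => (UCᵀ *ᵥ x) t) hieq).trans this
  set n : ℝ := x ⬝ᵥ x with hn
  have hnpos : 0 < n := by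
    rcases lt_or_eq_of_le (Finset.sum_nonneg fun i _ => mul_self_nonneg (x i)) with h | h
    · exact h
    · exact absurd ((dotProduct_self_eq_zero).mp h.symm) hx0
  have key : eAB j * n ≤ (eA ⟨m, by omega⟩ + eB k) * n := by
    calc eAB j * n = eAB j * ∑ i, ((UCᵀ *ᵥ x) i)^2 := by rw [norm_eq' UC hUC]
    _ ≤ ∑ i, eAB i * ((UCᵀ *ᵥ x) i)^2 := sum_ge' eAB haC _ j hyC
    _ = x ⬝ᵥ ((A + B) *ᵥ x) := by rw [hdC, quad_eq']
    _ = x ⬝ᵥ (A *ᵥ x) + x ⬝ᵥ (B *ᵥ x) := by rw [add_mulVec, dotProduct_add]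
    _ ≤ eA ⟨m, by omega⟩ * ∑ i, ((UAᵀ *ᵥ x) i)^2 + eB k * ∑ i, ((UBᵀ *ᵥ x) i)^2 := by
        apply add_le_add
        · rw [hdA, quad_eq']; exact sum_le' eA haA _ _ hyA
        · rw [hdB, quad_eq']; exact sum_le' eB haB _ _ hyB
    _ = (eA ⟨m, by omega⟩ + eB k) * n := by rw [norm_eq' UA hUA, norm_eq' UB hUB]; ring
  exact le_of_mul_le_mul_right key hnpos
end

section
/- Under the single spike model with Gaussian data and fixed sample size n, if d/λ_1 → 0 as d → ∞, then λ̂_1/λ_1 converges almost surely to χ²_n/n, where χ²_n/n means the random variable (1/n)Σ_{i=1}^n z_{i,1}² with z_{i,1} i.i.d. standard normal; i.e., λ̂_1/λ_1 − (1/n)Z̃_1ᵀZ̃_1 → 0 almost surely. -/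
open Matrix MeasureTheory ProbabilityTheory Filter

section Aux

open Real Topology

lemma rpow_two_eq (x : ℝ) : x ^ (2:ℝ) = x ^ 2 := by
  rw [show (2:ℝ) = ((2:ℕ):ℝ) by norm_num, Real.rpow_natCast]

lemma integrable_aux : Integrable (fun x : ℝ => x ^ 2 * rexp (-(1/2) * x ^ 2)) := by
  have := integrable_rpow_mul_exp_neg_mul_sq (b := 1/2) (by norm_num) (s := 2) (by norm_num)
  simpa [rpow_two_eq] using this

lemma pdf_eq (x : ℝ) : gaussianPDFReal 0 1 x = (√(2 * π))⁻¹ * rexp (-(1/2) * x ^ 2) := by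
  rw [gaussianPDFReal_def]
  simp only [NNReal.coe_one, mul_one, sub_zero]
  ring_nf

lemma integrable_sq_gauss : Integrable (fun x : ℝ => x ^ 2) (gaussianReal 0 1) := by
  rw [gaussianReal_of_var_ne_zero _ one_ne_zero]
  have hm : Measurable fun x => (gaussianPDFReal 0 1 x).toNNReal :=
    (measurable_gaussianPDFReal 0 1).real_toNNReal
  have : (gaussianPDF 0 1) = fun x => ((gaussianPDFReal 0 1 x).toNNReal : ENNReal) := by
    ext x; rw [gaussianPDF_def]; rfl
  rw [this, integrable_withDensity_iff_integrable_smul hm]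
  have : (fun x => (gaussianPDFReal 0 1 x).toNNReal • x ^ 2)
      = fun x : ℝ => (√(2 * π))⁻¹ * (x ^ 2 * rexp (-(1/2) * x ^ 2)) := by
    ext x
    rw [NNReal.smul_def, Real.coe_toNNReal _ (gaussianPDFReal_nonneg 0 1 x), smul_eq_mul, pdf_eq]
    ring
  rw [this]
  exact integrable_aux.const_mul _

lemma integral_aux : ∫ x : ℝ, x ^ 2 * rexp (-(1/2) * x ^ 2) = √(2 * π) := by
  have heven : (fun x : ℝ => x ^ 2 * rexp (-(1/2) * x ^ 2))
      = fun x : ℝ => |x| ^ 2 * rexp (-(1/2) * |x| ^ 2) := by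
    ext x; rw [sq_abs]
  rw [heven, integral_comp_abs (f := fun x : ℝ => x ^ 2 * rexp (-(1/2) * x ^ 2))]
  have h2 : ∫ x in Set.Ioi (0:ℝ), x ^ 2 * rexp (-(1/2) * x ^ 2)
      = ∫ x in Set.Ioi (0:ℝ), x ^ (2:ℝ) * rexp (-(1/2) * x ^ (2:ℝ)) := by
    simp [rpow_two_eq]
  rw [h2, integral_rpow_mul_exp_neg_mul_rpow (by norm_num) (by norm_num) (by norm_num)]
  rw [show ((2:ℝ) + 1) / 2 = 1/2 + 1 by norm_num, Real.Gamma_add_one (by norm_num),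
    Real.Gamma_one_half_eq]
  have e1 : ((1:ℝ)/2) ^ (-((2:ℝ)+1)/2 : ℝ) = 2 * √2 := by
    rw [show (-((2:ℝ)+1)/2 : ℝ) = -(3/2) by norm_num, one_div,
      Real.inv_rpow (by norm_num), ← Real.rpow_neg (by norm_num), neg_neg,
      show (3:ℝ)/2 = 1 + 1/2 by norm_num, Real.rpow_add two_pos, Real.rpow_one,
      ← Real.sqrt_eq_rpow]
  rw [e1, Real.sqrt_mul (by norm_num : (0:ℝ) ≤ 2)]
  ring

lemma integral_sq_gauss : ∫ x : ℝ, x ^ 2 ∂(gaussianReal 0 1) = 1 := by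
  rw [gaussianReal_of_var_ne_zero _ one_ne_zero]
  have hm : Measurable fun x => (gaussianPDFReal 0 1 x).toNNReal :=
    (measurable_gaussianPDFReal 0 1).real_toNNReal
  have : (gaussianPDF 0 1) = fun x => ((gaussianPDFReal 0 1 x).toNNReal : ENNReal) := by
    ext x; rw [gaussianPDF_def]; rfl
  rw [this, integral_withDensity_eq_integral_smul hm]
  have h : (fun x => (gaussianPDFReal 0 1 x).toNNReal • x ^ 2)
      = fun x : ℝ => (√(2 * π))⁻¹ * (x ^ 2 * rexp (-(1/2) * x ^ 2)) := by
    ext x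
    rw [NNReal.smul_def, Real.coe_toNNReal _ (gaussianPDFReal_nonneg 0 1 x), smul_eq_mul, pdf_eq]
    ring
  rw [h, integral_const_mul, integral_aux, inv_mul_cancel₀]
  positivity

lemma slln_sq {Ω : Type*} [MeasurableSpace Ω] (P : Measure Ω) [IsProbabilityMeasure P]
    (w : ℕ → Ω → ℝ) (hmeas : ∀ j, Measurable (w j))
    (hindep : Pairwise fun j j' => IndepFun (w j) (w j') P)
    (hgauss : ∀ j, Measure.map (w j) P = gaussianReal 0 1) :
    ∀ᵐ ω ∂P, Tendsto (fun m : ℕ => (∑ j ∈ Finset.range m, (w j ω)^2) / m) atTop (𝓝 1) := by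
  have hsq : Measurable fun x : ℝ => x ^ 2 := measurable_id.pow_const 2
  have hint : Integrable (fun ω => (w 0 ω)^2) P := by
    have h1 : Integrable (fun x : ℝ => x^2) (Measure.map (w 0) P) := by
      rw [hgauss 0]; exact integrable_sq_gauss
    exact (integrable_map_measure h1.aestronglyMeasurable (hmeas 0).aemeasurable).mp h1
  have hexp : P[fun ω => (w 0 ω)^2] = 1 := by
    have := integral_map (μ := P) (φ := w 0) (f := fun x : ℝ => x ^ 2)
      (hmeas 0).aemeasurable (by rw [hgauss 0]; exact hsq.aestronglyMeasurable)
    rw [hgauss 0, integral_sq_gauss] at this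
    exact this.symm
  have := strong_law_ae_real (fun j ω => (w j ω)^2) hint
    (fun j j' hne => (hindep hne).comp hsq hsq)
    (fun j => IdentDistrib.comp
      ⟨(hmeas j).aemeasurable, (hmeas 0).aemeasurable, by rw [hgauss, hgauss]⟩ hsq)
  rwa [hexp] at this

variable {m : ℕ}

lemma orth_quad (U : Matrix (Fin m) (Fin m) ℝ) (hU : Uᵀ * U = 1) (a b : Fin m → ℝ) :
    ∑ k, (∑ j, U k j * a j) * (∑ j, U k j * b j) = ∑ j, a j * b j := by
  calc ∑ k, (∑ j, U k j * a j) * (∑ j, U k j * b j)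
      = (U *ᵥ a) ⬝ᵥ (U *ᵥ b) := rfl
    _ = ((U *ᵥ a) ᵥ* U) ⬝ᵥ b := dotProduct_mulVec _ _ _
    _ = ∑ j, a j * b j := by
        rw [← mulVec_transpose, mulVec_mulVec, hU, one_mulVec]
        rfl

lemma spec_quad (Q : Matrix (Fin m) (Fin m) ℝ) (L : Fin m → ℝ) (v : Fin m → ℝ) :
    v ⬝ᵥ ((Q * diagonal L * Qᵀ) *ᵥ v) = ∑ k, L k * ((Qᵀ *ᵥ v) k)^2 := by
  rw [← mulVec_mulVec, ← mulVec_mulVec, dotProduct_mulVec, ← mulVec_transpose]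
  simp [mulVec_diagonal, dotProduct, sq]
  exact Finset.sum_congr rfl fun k _ => by ring

lemma cov_quad (n : ℕ) (Y : ℕ → Fin m → ℝ) (v : Fin m → ℝ) :
    v ⬝ᵥ (((n : ℝ)⁻¹ • ∑ i ∈ Finset.range n, vecMulVec (Y i) (Y i)) *ᵥ v)
      = (n : ℝ)⁻¹ * ∑ i ∈ Finset.range n, (Y i ⬝ᵥ v)^2 := by
  rw [smul_mulVec, dotProduct_smul, smul_eq_mul]
  congr 1
  induction (Finset.range n) using Finset.induction with
  | empty => simp
  | @insert a s h ih =>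
      rw [Finset.sum_insert h, Finset.sum_insert h, add_mulVec, dotProduct_add, ih]
      congr 1
      have hmv : vecMulVec (Y a) (Y a) *ᵥ v = (Y a ⬝ᵥ v) • Y a := by
        ext k
        simp [vecMulVec_apply, mulVec, dotProduct, Finset.mul_sum]
        rw [Finset.sum_mul]
        exact Finset.sum_congr rfl fun j _ => by ring
      rw [hmv, dotProduct_smul, smul_eq_mul, dotProduct_comm, sq]

lemma diag_entries (Q : Matrix (Fin m) (Fin m) ℝ) (hQ : Qᵀ * Q = 1) (L : Fin m → ℝ) (k : Fin m) :
    L k = (fun l => Q l k) ⬝ᵥ ((Q * diagonal L * Qᵀ) *ᵥ (fun l => Q l k)) := by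
  rw [spec_quad]
  have hcol : (Qᵀ *ᵥ fun l => Q l k) = fun j => (Qᵀ * Q) j k := by
    ext j; simp [mulVec, mul_apply, dotProduct, transpose_apply]
  rw [hcol, hQ]
  simp [one_apply, sq, Finset.sum_ite_eq']

lemma trace_spec (Q : Matrix (Fin m) (Fin m) ℝ) (hQ : Qᵀ * Q = 1) (L : Fin m → ℝ) :
    (Q * diagonal L * Qᵀ).trace = ∑ k, L k := by
  rw [trace_mul_cycle, hQ, one_mul, trace_diagonal]

lemma trace_cov (n : ℕ) (Y : ℕ → Fin m → ℝ) :
    ((n : ℝ)⁻¹ • ∑ i ∈ Finset.range n, vecMulVec (Y i) (Y i)).trace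
      = (n : ℝ)⁻¹ * ∑ i ∈ Finset.range n, ∑ k, (Y i k)^2 := by
  rw [trace_smul, trace_sum, smul_eq_mul]
  congr 1
  refine Finset.sum_congr rfl fun i _ => ?_
  simp [trace, vecMulVec_apply, diag, sq]

lemma eig_nonneg (n : ℕ) (Y : ℕ → Fin m → ℝ) (Q : Matrix (Fin m) (Fin m) ℝ)
    (L : Fin m → ℝ) (hQ : Qᵀ * Q = 1)
    (hM : (n : ℝ)⁻¹ • ∑ i ∈ Finset.range n, vecMulVec (Y i) (Y i) = Q * diagonal L * Qᵀ)
    (k : Fin m) : 0 ≤ L k := by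
  rw [diag_entries Q hQ L k, ← hM, cov_quad]
  positivity

lemma eig_upper (n : ℕ) (Y : ℕ → Fin m → ℝ) (Q : Matrix (Fin m) (Fin m) ℝ)
    (L : Fin m → ℝ) (hQ : Qᵀ * Q = 1)
    (hM : (n : ℝ)⁻¹ • ∑ i ∈ Finset.range n, vecMulVec (Y i) (Y i) = Q * diagonal L * Qᵀ)
    (k : Fin m) : L k ≤ (n : ℝ)⁻¹ * ∑ i ∈ Finset.range n, ∑ l, (Y i l)^2 := by
  rw [← trace_cov, hM, trace_spec Q hQ L]
  exact Finset.single_le_sum (fun l _ => eig_nonneg n Y Q L hQ hM l) (Finset.mem_univ k)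

lemma eig_lower (n : ℕ) (Y : ℕ → Fin m → ℝ) (Q : Matrix (Fin m) (Fin m) ℝ)
    (L : Fin m → ℝ) (hA : Antitone L) (hQ : Qᵀ * Q = 1)
    (hM : (n : ℝ)⁻¹ • ∑ i ∈ Finset.range n, vecMulVec (Y i) (Y i) = Q * diagonal L * Qᵀ)
    (v : Fin m → ℝ) (hv : v ⬝ᵥ v = 1) (hm : 0 < m) :
    (n : ℝ)⁻¹ * ∑ i ∈ Finset.range n, (Y i ⬝ᵥ v)^2 ≤ L ⟨0, hm⟩ := by
  have hQQ : Q * Qᵀ = 1 := mul_eq_one_comm.mp hQ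
  have hw : ∑ k, ((Qᵀ *ᵥ v) k)^2 = 1 := by
    have : ∑ k, ((Qᵀ *ᵥ v) k)^2 = (Qᵀ *ᵥ v) ⬝ᵥ (Qᵀ *ᵥ v) := by
      simp [dotProduct, sq]
    rw [this, dotProduct_mulVec, vecMul_transpose, mulVec_mulVec, hQQ, one_mulVec, hv]
  calc (n : ℝ)⁻¹ * ∑ i ∈ Finset.range n, (Y i ⬝ᵥ v)^2
      = v ⬝ᵥ ((Q * diagonal L * Qᵀ) *ᵥ v) := by rw [← hM, cov_quad]
    _ = ∑ k, L k * ((Qᵀ *ᵥ v) k)^2 := spec_quad Q L v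
    _ ≤ ∑ k, L ⟨0, hm⟩ * ((Qᵀ *ᵥ v) k)^2 := by
        refine Finset.sum_le_sum fun k _ => ?_
        exact mul_le_mul_of_nonneg_right (hA (Fin.mk_le_of_le_val (Nat.zero_le _))) (sq_nonneg _)
    _ = L ⟨0, hm⟩ := by rw [← Finset.mul_sum, hw, mul_one]

lemma dot_col (U : Matrix (Fin m) (Fin m) ℝ) (hU : Uᵀ * U = 1) (a : Fin m → ℝ) (j0 : Fin m) :
    ∑ k, (∑ j, U k j * a j) * U k j0 = a j0 := by
  have h := orth_quad U hU a (Pi.single j0 1)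
  simpa [Pi.single_apply, mul_ite, Finset.sum_ite_eq, Finset.sum_ite_eq'] using h

lemma col_norm (U : Matrix (Fin m) (Fin m) ℝ) (hU : Uᵀ * U = 1) (j0 : Fin m) :
    ∑ k, (U k j0)^2 = 1 := by
  have h := orth_quad U hU (Pi.single j0 1) (Pi.single j0 1)
  simpa [Pi.single_apply, mul_ite, Finset.sum_ite_eq, Finset.sum_ite_eq', sq] using h

lemma sq_sum (U : Matrix (Fin m) (Fin m) ℝ) (hU : Uᵀ * U = 1) (a : Fin m → ℝ) :
    ∑ k, (∑ j, U k j * a j)^2 = ∑ j, (a j)^2 := by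
  simpa [sq] using orth_quad U hU a a

end Aux

/-- Single spike Gaussian model with fixed sample size `n`, dimension `d → ∞`: eigenvalues
`λ_1 → ∞` with `d/λ_1 → 0` and `λ_2 = ⋯ = λ_d = 1`, i.i.d. standard normal scores
`z_{i,j}`. Then `λ̂_1/λ_1` converges almost surely to `χ²_n/n`, i.e.
`λ̂_1/λ_1 − (1/n) Z̃_1ᵀ Z̃_1 → 0` almost surely, where `Z̃_1 = (z_{1,1},…,z_{n,1})ᵀ`. -/
theorem single_spike_hdlss_eigenvalue_gaussian
    {Ω : Type*} [MeasurableSpace Ω] (P : Measure Ω) [IsProbabilityMeasure P]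
    (n : ℕ) (hn : 0 < n)
    (z : ℕ × ℕ → Ω → ℝ)
    (hmeas : ∀ p, Measurable (z p))
    (hindep : iIndepFun z P)
    (hgauss : ∀ p, Measure.map (z p) P = gaussianReal 0 1)
    (d : ℕ → ℕ) (hd : ∀ t, 1 < d t) (hdinf : Tendsto d atTop atTop)
    (lam1 : ℕ → ℝ) (hpos : ∀ t, 1 < lam1 t)
    (hlaminf : Tendsto lam1 atTop atTop)
    (hratio : Tendsto (fun t => (d t : ℝ) / lam1 t) atTop (nhds 0))
    (U : (t : ℕ) → Matrix (Fin (d t)) (Fin (d t)) ℝ)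
    (hU : ∀ t, (U t)ᵀ * U t = 1)
    (X : (t : ℕ) → ℕ → Ω → Fin (d t) → ℝ)
    (hX : ∀ t i ω k, X t i ω k
      = ∑ j, U t k j * Real.sqrt (if (j : ℕ) = 0 then lam1 t else 1) * z (i, (j : ℕ)) ω)
    (lamhat : (t : ℕ) → Ω → Fin (d t) → ℝ)
    (Uhat : (t : ℕ) → Ω → Matrix (Fin (d t)) (Fin (d t)) ℝ)
    (hspec : ∀ t ω, Antitone (lamhat t ω) ∧ (Uhat t ω)ᵀ * Uhat t ω = 1 ∧
      (n : ℝ)⁻¹ • ∑ i ∈ Finset.range n, vecMulVec (X t i ω) (X t i ω)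
        = Uhat t ω * diagonal (lamhat t ω) * (Uhat t ω)ᵀ) :
    ∀ᵐ ω ∂P,
      Tendsto (fun t => lamhat t ω ⟨0, Nat.zero_lt_of_lt (hd t)⟩ / lam1 t
          - (n : ℝ)⁻¹ * ∑ i ∈ Finset.range n, (z (i, 0) ω) ^ 2) atTop (nhds 0) := by
  -- strong law for each row i
  have hW : ∀ i : ℕ, ∀ᵐ ω ∂P,
      Tendsto (fun m : ℕ => (∑ j ∈ Finset.range m, (z (i, j) ω)^2) / m) atTop (nhds 1) := by
    intro i
    refine slln_sq P (fun j => z (i, j)) (fun j => hmeas _) ?_ (fun j => hgauss _)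
    intro j j' hne
    exact hindep.indepFun (by simpa using hne)
  filter_upwards [MeasureTheory.ae_all_iff.mpr hW] with ω hω
  -- notation
  set c : ℝ := (n : ℝ)⁻¹ * ∑ i ∈ Finset.range n, (z (i, 0) ω) ^ 2 with hc
  have hl1pos : ∀ t, (0:ℝ) < lam1 t := fun t => lt_trans one_pos (hpos t)
  have hXa : ∀ t i, X t i ω = fun k => ∑ j, U t k j *
      (Real.sqrt (if (j : ℕ) = 0 then lam1 t else 1) * z (i, (j : ℕ)) ω) := by
    intro t i; funext k; rw [hX]
    exact Finset.sum_congr rfl fun j _ => (mul_assoc _ _ _)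
  -- the per-t lower bound
  have hlow : ∀ t, lam1 t * c ≤ lamhat t ω ⟨0, Nat.zero_lt_of_lt (hd t)⟩ := by
    intro t
    obtain ⟨hA, hQ, hM⟩ := hspec t ω
    set e0 : Fin (d t) := ⟨0, Nat.zero_lt_of_lt (hd t)⟩ with he0
    set v : Fin (d t) → ℝ := fun k => U t k e0 with hv
    have hvv : v ⬝ᵥ v = 1 := by
      show ∑ k, U t k e0 * U t k e0 = 1
      simpa [sq] using col_norm (U t) (hU t) e0
    have key := eig_lower n (fun i => X t i ω) (Uhat t ω) (lamhat t ω) hA hQ hM v hvv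
      (Nat.zero_lt_of_lt (hd t))
    refine le_trans (le_of_eq ?_) key
    rw [hc, ← mul_assoc, mul_comm (lam1 t) ((n:ℝ)⁻¹), mul_assoc, Finset.mul_sum]
    congr 1
    refine Finset.sum_congr rfl fun i _ => ?_
    have hdot : X t i ω ⬝ᵥ v = Real.sqrt (lam1 t) * z (i, 0) ω := by
      show ∑ k, X t i ω k * v k = _
      have := dot_col (U t) (hU t)
        (fun j => Real.sqrt (if (j : ℕ) = 0 then lam1 t else 1) * z (i, (j : ℕ)) ω) e0
      rw [hXa t i]
      simpa [hv, he0] using this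
    rw [hdot, mul_pow, Real.sq_sqrt (hl1pos t).le]
  -- the per-t upper bound
  have hup : ∀ t, lamhat t ω ⟨0, Nat.zero_lt_of_lt (hd t)⟩ ≤ lam1 t * c +
      (n : ℝ)⁻¹ * ∑ i ∈ Finset.range n, ∑ j ∈ Finset.range (d t), (z (i, j) ω)^2 := by
    intro t
    obtain ⟨hA, hQ, hM⟩ := hspec t ω
    set e0 : Fin (d t) := ⟨0, Nat.zero_lt_of_lt (hd t)⟩ with he0
    have key := eig_upper n (fun i => X t i ω) (Uhat t ω) (lamhat t ω) hQ hM e0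
    refine le_trans key ?_
    have hper : ∀ i, ∑ l, (X t i ω l)^2
        ≤ lam1 t * (z (i, 0) ω)^2 + ∑ j ∈ Finset.range (d t), (z (i, j) ω)^2 := by
      intro i
      have h1 : ∑ l, (X t i ω l)^2
          = ∑ j : Fin (d t), (if (j:ℕ) = 0 then lam1 t else 1) * (z (i, (j:ℕ)) ω)^2 := by
        simp only [hXa t i]
        rw [sq_sum (U t) (hU t)]
        refine Finset.sum_congr rfl fun j _ => ?_
        rw [mul_pow, Real.sq_sqrt (by split_ifs; exacts [(hl1pos t).le, zero_le_one])]
      rw [h1, ← Finset.add_sum_erase _ _ (Finset.mem_univ e0)]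
      have he0v : ((e0 : Fin (d t)) : ℕ) = 0 := rfl
      rw [he0v, if_pos rfl]
      refine add_le_add (le_refl _) ?_
      have h2 : ∀ j ∈ Finset.univ.erase e0,
          (if (j : ℕ) = 0 then lam1 t else 1) * (z (i, (j:ℕ)) ω)^2 = (z (i, (j:ℕ)) ω)^2 := by
        intro j hj
        rw [if_neg, one_mul]
        intro hj0
        exact (Finset.mem_erase.mp hj).1 (Fin.ext (by rw [hj0, he0v]))
      rw [Finset.sum_congr rfl h2, ← Fin.sum_univ_eq_sum_range (fun j => (z (i, j) ω)^2) (d t)]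
      exact Finset.sum_le_sum_of_subset_of_nonneg (Finset.subset_univ _)
        (fun j _ _ => sq_nonneg _)
    calc (n:ℝ)⁻¹ * ∑ i ∈ Finset.range n, ∑ l, (X t i ω l)^2
        ≤ (n:ℝ)⁻¹ * ∑ i ∈ Finset.range n,
            (lam1 t * (z (i, 0) ω)^2 + ∑ j ∈ Finset.range (d t), (z (i, j) ω)^2) :=
          mul_le_mul_of_nonneg_left (Finset.sum_le_sum fun i _ => hper i) (by positivity)
      _ = lam1 t * c + (n:ℝ)⁻¹ * ∑ i ∈ Finset.range n,
            ∑ j ∈ Finset.range (d t), (z (i, j) ω)^2 := by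
          rw [hc, Finset.sum_add_distrib, ← Finset.mul_sum]
          ring
  -- final limit argument
  have h0 : ∀ t, 0 ≤ lamhat t ω ⟨0, Nat.zero_lt_of_lt (hd t)⟩ / lam1 t - c := by
    intro t
    rw [sub_nonneg, le_div_iff₀ (hl1pos t), mul_comm]
    exact hlow t
  have hle : ∀ t, lamhat t ω ⟨0, Nat.zero_lt_of_lt (hd t)⟩ / lam1 t - c
      ≤ ((d t : ℝ) / lam1 t) * ((n:ℝ)⁻¹ * ∑ i ∈ Finset.range n,
          ((∑ j ∈ Finset.range (d t), (z (i, j) ω)^2) / (d t : ℝ))) := by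
    intro t
    have hdt : (0:ℝ) < (d t : ℝ) := by
      exact_mod_cast Nat.zero_lt_of_lt (hd t)
    have hR : ((d t : ℝ) / lam1 t) * ((n:ℝ)⁻¹ * ∑ i ∈ Finset.range n,
          ((∑ j ∈ Finset.range (d t), (z (i, j) ω)^2) / (d t : ℝ)))
        = ((n:ℝ)⁻¹ * ∑ i ∈ Finset.range n,
            ∑ j ∈ Finset.range (d t), (z (i, j) ω)^2) / lam1 t := by
      rw [← Finset.sum_div, div_eq_mul_inv _ ((d t : ℝ)), div_mul_eq_mul_div]
      rw [show (d t : ℝ) * ((n:ℝ)⁻¹ * ((∑ i ∈ Finset.range n,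
            ∑ j ∈ Finset.range (d t), (z (i, j) ω)^2) * ((d t : ℝ))⁻¹))
          = ((n:ℝ)⁻¹ * ∑ i ∈ Finset.range n, ∑ j ∈ Finset.range (d t), (z (i, j) ω)^2)
            * ((d t : ℝ) * ((d t : ℝ))⁻¹) by ring, mul_inv_cancel₀ hdt.ne', mul_one]
    rw [hR]
    have h3 : lamhat t ω ⟨0, Nat.zero_lt_of_lt (hd t)⟩ / lam1 t
        ≤ (lam1 t * c + (n:ℝ)⁻¹ * ∑ i ∈ Finset.range n,
            ∑ j ∈ Finset.range (d t), (z (i, j) ω)^2) / lam1 t := by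
      exact (div_le_div_iff_of_pos_right (hl1pos t)).mpr (hup t)
    have h4 : (lam1 t * c + (n:ℝ)⁻¹ * ∑ i ∈ Finset.range n,
          ∑ j ∈ Finset.range (d t), (z (i, j) ω)^2) / lam1 t
        = c + ((n:ℝ)⁻¹ * ∑ i ∈ Finset.range n,
            ∑ j ∈ Finset.range (d t), (z (i, j) ω)^2) / lam1 t := by
      rw [add_div, mul_div_cancel_left₀ _ (hl1pos t).ne']
    rw [h4] at h3
    linarith
  have hG : Tendsto (fun t => (n:ℝ)⁻¹ * ∑ i ∈ Finset.range n,
      ((∑ j ∈ Finset.range (d t), (z (i, j) ω)^2) / (d t : ℝ))) atTop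
      (nhds ((n:ℝ)⁻¹ * ∑ _i ∈ Finset.range n, (1:ℝ))) := by
    refine Tendsto.const_mul _ (tendsto_finset_sum _ fun i _ => ?_)
    exact (hω i).comp hdinf
  have hB := hratio.mul hG
  rw [zero_mul] at hB
  exact squeeze_zero h0 hle hB
end
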